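/- Suppose positive integers a_1,...,a_d and b_1,...,b_e with d ≥ e ≥ 2 satisfy K(a_1,...,a_d) = K(b_1,...,b_e) and K(a_2,...,a_d) = K(b_2,...,b_e). Then a_i = b_i for i = 1,...,e-1. -/

import Mathlib

def contK : List ℕ → ℕ
  | [] => 1
  | [a] => a
  | a :: b :: l => a * contK (b :: l) + contK l

lemma contK_pos (l : List ℕ) (h : ∀ x ∈ l, 0 < x) : 0 < contK l := by
  match l with
  | [] => simp [contK]
  | [a] => simpa [contK] using h a (by simp)
  | a :: b :: m =>
    have := contK_pos (b :: m) (fun x hx => h x (by simp_all))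
    simp only [contK]
    exact Nat.lt_of_lt_of_le (contK_pos m (fun x hx => h x (by simp_all)))
      (Nat.le_add_left _ _)

lemma contK_cons (x : ℕ) (l : List ℕ) (hl : l ≠ []) :
    contK (x :: l) = x * contK l + contK l.tail := by
  match l with
  | [] => simp at hl
  | b :: m => rfl

lemma contK_two_le (l : List ℕ) (h : ∀ x ∈ l, 0 < x) (h2 : 2 ≤ l.length) :
    2 ≤ contK l := by
  match l with
  | [] => simp at h2
  | [a] => simp at h2
  | a :: b :: m =>
    have h1 := h a (by simp)
    have hp := contK_pos (b :: m) (fun x hx => h x (by simp_all))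
    have hq := contK_pos m (fun x hx => h x (by simp_all))
    simp only [contK]
    nlinarith

lemma contK_tail_lt (l : List ℕ) (h : ∀ x ∈ l, 0 < x) (hne : l ≠ [])
    (h2 : 2 ≤ contK l) : contK l.tail < contK l := by
  match l with
  | [] => simp at hne
  | [a] => simp [contK] at h2 ⊢; omega
  | a :: b :: m =>
    have h1 := h a (by simp)
    have hp := contK_pos (b :: m) (fun x hx => h x (by simp_all))
    have hq := contK_pos m (fun x hx => h x (by simp_all))
    simp only [contK, List.tail_cons]
    nlinarith

lemma contK_eq_one (l : List ℕ) (h : ∀ x ∈ l, 0 < x) (hl : contK l = 1) :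
    l = [] ∨ l = [1] := by
  match l with
  | [] => simp
  | [a] => right; simp [contK] at hl; simp [hl]
  | a :: b :: m =>
    exfalso
    have := contK_two_le (a :: b :: m) h (by simp)
    omega

lemma div_unique {q1 q2 r1 r2 k : ℕ} (hk : 0 < k) (h1 : r1 < k) (h2 : r2 < k)
    (h : q1 * k + r1 = q2 * k + r2) : q1 = q2 ∧ r1 = r2 := by
  have e1 : (q1 * k + r1) / k = q1 := by
    rw [Nat.mul_comm, Nat.mul_add_div hk]; simp [Nat.div_eq_of_lt h1]
  have e2 : (q2 * k + r2) / k = q2 := by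
    rw [Nat.mul_comm, Nat.mul_add_div hk]; simp [Nat.div_eq_of_lt h2]
  have hq : q1 = q2 := by rw [← e1, ← e2, h]
  subst hq
  exact ⟨rfl, Nat.add_left_cancel h⟩

lemma main_aux : ∀ (bs : List ℕ) (b1 b2 : ℕ) (a : List ℕ),
    (∀ x ∈ a, 0 < x) → (∀ x ∈ b1 :: b2 :: bs, 0 < x) →
    (b1 :: b2 :: bs).length ≤ a.length →
    contK a = contK (b1 :: b2 :: bs) → contK a.tail = contK (b2 :: bs) →
    a.take (bs.length + 1) = (b1 :: b2 :: bs).take (bs.length + 1) := by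
  intro bs
  induction bs with
  | nil =>
    intro b1 b2 a hapos hbpos hlen h1 h2
    match a with
    | a1 :: a2 :: as =>
      have hta : (a2 :: as) ≠ [] := by simp
      have htapos : ∀ x ∈ a2 :: as, 0 < x := fun x hx => hapos x (by simp_all)
      simp only [List.tail_cons, contK] at h2
      -- h2 : contK (a2 :: as) = b2
      by_cases hb2 : b2 = 1
      · -- contK (a2::as) = 1 so a2::as = [1]
        have : (a2 :: as) = [] ∨ (a2 :: as) = [1] := by
          apply contK_eq_one _ htapos; omega
        rcases this with h | h
        · simp at h
        · have ha2 : a2 = 1 ∧ as = [] := by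
            constructor <;> [injection h; exact (List.cons.injEq .. ▸ h).2]
          obtain ⟨rfl, rfl⟩ := ha2
          simp only [contK, hb2] at h1
          simp only [List.take]
          congr 1
          omega
      · have hb2' : 2 ≤ b2 := by
          have := hbpos b2 (by simp); omega
        rw [contK_cons a1 _ hta] at h1
        simp only [contK] at h1
        -- h1 : a1 * contK (a2::as) + contK (a2::as).tail = b1 * b2 + 1
        have hlt : contK (a2 :: as).tail < contK (a2 :: as) :=
          contK_tail_lt _ htapos hta (by omega)
        rw [h2] at h1 hlt
        have hdu := div_unique (q1 := a1) (q2 := b1) (k := b2)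
          (by omega) hlt (by omega) h1
        simp only [List.length_nil, Nat.zero_add, List.take_succ_cons,
          List.take_zero, hdu.1]
  | cons b3 bs' ih =>
    intro b1 b2 a hapos hbpos hlen h1 h2
    match a with
    | a1 :: a2 :: as =>
      have hta : (a2 :: as) ≠ [] := by simp
      have htapos : ∀ x ∈ a2 :: as, 0 < x := fun x hx => hapos x (by simp_all)
      have htbpos : ∀ x ∈ b2 :: b3 :: bs', 0 < x := fun x hx => hbpos x (by simp_all)
      have hKtb : 2 ≤ contK (b2 :: b3 :: bs') := contK_two_le _ htbpos (by simp)
      simp only [List.tail_cons] at h2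
      have hlta : contK (a2 :: as).tail < contK (a2 :: as) :=
        contK_tail_lt _ htapos hta (by omega)
      have hltb : contK (b2 :: b3 :: bs').tail < contK (b2 :: b3 :: bs') :=
        contK_tail_lt _ htbpos (by simp) hKtb
      rw [contK_cons a1 _ hta, contK_cons b1 _ (by simp)] at h1
      rw [h2] at h1 hlta
      have hdu := div_unique (q1 := a1) (q2 := b1)
        (k := contK (b2 :: b3 :: bs')) (by omega) hlta hltb h1
      have hrec := ih b2 b3 (a2 :: as) htapos htbpos
        (by simpa using Nat.le_of_succ_le_succ hlen)
        (by rw [h2]) (by simpa using hdu.2)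
      simp only [List.take_succ_cons] at hrec
      simp only [List.length_cons, List.take_succ_cons, hdu.1, hrec]

theorem continuant_prefix_unique (a b : List ℕ)
    (hapos : ∀ x ∈ a, 0 < x) (hbpos : ∀ x ∈ b, 0 < x)
    (hb2 : 2 ≤ b.length) (hba : b.length ≤ a.length)
    (h1 : contK a = contK b) (h2 : contK a.tail = contK b.tail) :
    a.take (b.length - 1) = b.take (b.length - 1) := by
  match b with
  | b1 :: b2 :: bs =>
    have := main_aux bs b1 b2 a hapos hbpos hba h1 (by simpa using h2)
    simpa [Nat.add_sub_cancel] using this
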